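/- Let q ∈ Z[i] be nonzero and write q = q₁q₂ where q₁ divides a power of N and gcd(q₂, N) = 1 (N ∈ Z[i] nonzero). Define S_q(0, N) = Σ_{b mod q} ρ_q(b(4 + N²b)), where ρ_q(δ) = |{x mod 2q : x² ≡ δ (mod 4q)}|. Then S_q(0, N) = Nr(q₁)·φ(q₂), where Nr is the norm on Z[i] and φ is the Euler function of Z[i]. -/

import Mathlib

namespace Stmt10Aux

open Ideal

/-! ### ℤ-module structure of ℤ[i] -/

def zequiv : GaussianInt ≃ₗ[ℤ] (Fin 2 → ℤ) where
  toFun x := ![x.re, x.im]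
  map_add' x y := by funext i; fin_cases i <;> simp
  map_smul' n x := by
    funext i
    have : n • x = (n : GaussianInt) * x := (zsmul_eq_mul _ _)
    fin_cases i <;> simp [this, Zsqrtd.re_smul, Zsqrtd.im_smul]
  invFun f := ⟨f 0, f 1⟩
  left_inv x := by simp
  right_inv f := by funext i; fin_cases i <;> simp

noncomputable instance : Module.Free ℤ GaussianInt :=
  Module.Free.of_basis (Module.Basis.ofEquivFun zequiv)

instance : Module.Finite ℤ GaussianInt :=
  Module.Finite.of_basis (Module.Basis.ofEquivFun zequiv)

/-! ### A parity lemma in ℤ[i] -/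

lemma zmod4 (a b c e : ℤ) (h1 : (4:ℤ) ∣ a*(a+2*c) + (-1) * (b*(b+2*e)))
    (h2 : (4:ℤ) ∣ a*(b+2*e) + b*(a+2*c)) : 2 ∣ a ∧ 2 ∣ b := by
  have key : ∀ a b c e : ZMod 4, (a*(a+2*c) - b*(b+2*e) = 0) → (a*(b+2*e) + b*(a+2*c) = 0) →
      (a = 0 ∨ a = 2) ∧ (b = 0 ∨ b = 2) := by decide
  have h1' : ((a*(a+2*c) - b*(b+2*e) : ℤ) : ZMod 4) = 0 := by
    rw [ZMod.intCast_zmod_eq_zero_iff_dvd]; convert h1 using 1 <;> ring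
  have h2' : ((a*(b+2*e) + b*(a+2*c) : ℤ) : ZMod 4) = 0 := by
    rw [ZMod.intCast_zmod_eq_zero_iff_dvd]; exact_mod_cast h2
  push_cast at h1' h2'
  have := key a b c e h1' h2'
  have conv2 : ∀ x : ℤ, ((x : ZMod 4) = 0 ∨ (x : ZMod 4) = 2) → 2 ∣ x := by
    intro x hx
    rcases hx with hx | hx
    · have : (4:ℤ) ∣ x := by rwa [ZMod.intCast_zmod_eq_zero_iff_dvd] at hx
      omega
    · have : ((x - 2 : ℤ) : ZMod 4) = 0 := by push_cast; rw [hx]; ring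
      have : (4:ℤ) ∣ x - 2 := by rwa [ZMod.intCast_zmod_eq_zero_iff_dvd] at this
      omega
  exact ⟨conv2 a this.1, conv2 b this.2⟩

/-- If `4 ∣ y² - z²` in `ℤ[i]` then `2 ∣ y - z`. -/
lemma two_dvd_of_sq_cong {y z : GaussianInt} (h : (4:GaussianInt) ∣ y^2 - z^2) :
    (2:GaussianInt) ∣ y - z := by
  set d := y - z with hd
  have h4 : (4:GaussianInt) ∣ d * (d + 2*z) := by
    convert h using 1; rw [hd]; ring
  have hc : ((4:ℤ) : GaussianInt) ∣ d * (d + 2*z) := by exact_mod_cast h4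
  rw [Zsqrtd.intCast_dvd] at hc
  obtain ⟨hre, him⟩ := hc
  have hre' : (4:ℤ) ∣ d.re*(d.re+2*z.re) + (-1) * (d.im*(d.im+2*z.im)) := by
    convert hre using 1
    simp [Zsqrtd.re_mul]
  have him' : (4:ℤ) ∣ d.re*(d.im+2*z.im) + d.im*(d.re+2*z.re) := by
    convert him using 1
    simp [Zsqrtd.im_mul]
  obtain ⟨ha, hb⟩ := zmod4 _ _ _ _ hre' him'
  have : ((2:ℤ) : GaussianInt) ∣ d := by
    rw [Zsqrtd.intCast_dvd]; exact ⟨ha, hb⟩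
  exact_mod_cast this

/-! ### Counting solutions of `t² + n t b = b` in commutative rings -/

variable {A B : Type*} [CommRing A] [CommRing B]

/-- Solutions `(b, t)` of `t² + n·t·b - b = 0`. -/
def Sol (A : Type*) [CommRing A] (n : A) : Type _ :=
  {p : A × A // p.2^2 + n * p.2 * p.1 - p.1 = 0}

lemma isUnit_one_sub_mul {n : A} (h : IsNilpotent n) (t : A) : IsUnit (1 - n * t) := by
  obtain ⟨m, hm⟩ := h
  exact IsNilpotent.isUnit_one_sub ⟨m, by rw [mul_pow, hm, zero_mul]⟩

noncomputable def solEquivOfNilpotent (n : A) (h : IsNilpotent n) : Sol A n ≃ A where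
  toFun p := p.1.2
  invFun t :=
    ⟨(↑(isUnit_one_sub_mul h t).unit⁻¹ * t^2, t), by
      have hv : (1 - n * t) * ↑(isUnit_one_sub_mul h t).unit⁻¹ = 1 := by
        nth_rewrite 1 [← (isUnit_one_sub_mul h t).unit_spec]
        exact (isUnit_one_sub_mul h t).unit.mul_inv
      set v : A := ↑(isUnit_one_sub_mul h t).unit⁻¹
      show t^2 + n * t * (v * t^2) - v * t^2 = 0
      linear_combination (-(t^2 : A)) * hv⟩
  left_inv p := by
    obtain ⟨⟨b, t⟩, hp⟩ := p
    apply Subtype.ext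
    have hv : (1 - n * t) * ↑(isUnit_one_sub_mul h t).unit⁻¹ = 1 := by
      nth_rewrite 1 [← (isUnit_one_sub_mul h t).unit_spec]
      exact (isUnit_one_sub_mul h t).unit.mul_inv
    set v : A := ↑(isUnit_one_sub_mul h t).unit⁻¹
    have hp' : t^2 + n * t * b - b = 0 := hp
    show ((v * t^2, t) : A × A) = (b, t)
    have : v * t^2 = b := by linear_combination b * hv + v * hp'
    rw [this]
  right_inv t := rfl

noncomputable def solEquivOfUnit (n : A) (h : IsUnit n) : Sol A n ≃ Aˣ where
  toFun p := ⟨n * p.1.2 - 1, -(n^2 * p.1.1 + n * p.1.2 + 1),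
    by linear_combination (-(n^2 : A)) * p.2,
    by linear_combination (-(n^2 : A)) * p.2⟩
  invFun u :=
    have hn : n * ↑h.unit⁻¹ = 1 := by
      nth_rewrite 1 [← h.unit_spec]; exact h.unit.mul_inv
    have hu : (↑u * ↑u⁻¹ : A) = 1 := u.mul_inv
    ⟨(-(↑u⁻¹ : A) * ((↑h.unit⁻¹ : A) * (↑u + 1))^2, (↑h.unit⁻¹ : A) * (↑u + 1)), by
      set w : A := ↑h.unit⁻¹
      set v : A := (↑u⁻¹ : A)
      show (w * (↑u + 1))^2 + n * (w * (↑u + 1)) * (-v * (w * (↑u + 1))^2)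
          - (-v * (w * (↑u + 1))^2) = 0
      linear_combination (-(w*(↑u+1))^2 * v * (↑u+1)) * hn
        + (-(w*(↑u + 1))^2) * hu⟩
  left_inv p := by
    obtain ⟨⟨b, t⟩, hp⟩ := p
    apply Subtype.ext
    have hn : n * ↑h.unit⁻¹ = 1 := by
      nth_rewrite 1 [← h.unit_spec]; exact h.unit.mul_inv
    set w : A := ↑h.unit⁻¹
    have hp' : t^2 + n * t * b - b = 0 := hp
    show ((-(-(n^2 * b + n * t + 1)) * (w * ((n * t - 1) + 1))^2, w * ((n * t - 1) + 1)) : A × A)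
        = (b, t)
    have h2 : w * ((n * t - 1) + 1) = t := by linear_combination t * hn
    rw [h2]
    have h1 : -(-(n^2 * b + n * t + 1)) * t^2 = b := by
      linear_combination (n*t + 1) * hp'
    rw [h1]
  right_inv u := by
    apply Units.ext
    have hn : n * ↑h.unit⁻¹ = 1 := by
      nth_rewrite 1 [← h.unit_spec]; exact h.unit.mul_inv
    show n * ((↑h.unit⁻¹ : A) * (↑u + 1)) - 1 = ↑u
    linear_combination ((↑u : A) + 1) * hn

def solEquivProd (n : A × B) : Sol (A × B) n ≃ Sol A n.1 × Sol B n.2 where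
  toFun p := (⟨(p.1.1.1, p.1.2.1), by
      have := congrArg Prod.fst p.2; simpa using this⟩,
    ⟨(p.1.1.2, p.1.2.2), by
      have := congrArg Prod.snd p.2; simpa using this⟩)
  invFun p := ⟨((p.1.1.1, p.2.1.1), (p.1.1.2, p.2.1.2)), by
    have h1 := p.1.2; have h2 := p.2.2
    apply Prod.ext <;> simpa⟩
  left_inv p := rfl
  right_inv p := rfl

def solEquivOfRingEquiv (e : A ≃+* B) (n : A) : Sol A n ≃ Sol B (e n) where
  toFun p := ⟨(e p.1.1, e p.1.2), by
    have := congrArg e p.2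
    simpa [map_sub, map_add, _root_.map_mul, map_pow] using this⟩
  invFun p := ⟨(e.symm p.1.1, e.symm p.1.2), by
    have := congrArg e.symm p.2
    simpa [map_sub, map_add, _root_.map_mul, map_pow] using this⟩
  left_inv p := by apply Subtype.ext; simp
  right_inv p := by apply Subtype.ext; simp

/-! ### The local count for a single `b` -/

lemma rel_iff (q N b τ : GaussianInt) :
    ((Ideal.Quotient.mk (Ideal.span {q}) τ)^2
      + (Ideal.Quotient.mk (Ideal.span {q}) N) * (Ideal.Quotient.mk (Ideal.span {q}) τ)
        * (Ideal.Quotient.mk (Ideal.span {q}) b)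
      - (Ideal.Quotient.mk (Ideal.span {q}) b) = 0)
    ↔ q ∣ τ^2 + N * τ * b - b := by
  rw [← map_pow, ← _root_.map_mul, ← _root_.map_mul, ← map_add, ← map_sub,
    Ideal.Quotient.eq_zero_iff_mem, Ideal.mem_span_singleton]

lemma card_X (q N b : GaussianInt) :
    Nat.card {x : GaussianInt ⧸ Ideal.span {2 * q} //
        ∃ y : GaussianInt, Ideal.Quotient.mk (Ideal.span {2 * q}) y = x ∧
          (4 * q) ∣ (y ^ 2 - b * (4 + N ^ 2 * b))}
    = Nat.card {t : GaussianInt ⧸ Ideal.span {q} //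
        t^2 + (Ideal.Quotient.mk (Ideal.span {q}) N) * t * (Ideal.Quotient.mk (Ideal.span {q}) b)
          - (Ideal.Quotient.mk (Ideal.span {q}) b) = 0} := by
  symm
  apply Nat.card_congr
  apply Equiv.ofBijective
    (f := fun t => ⟨Ideal.Quotient.mk (Ideal.span {2*q}) (N*b + 2*(Quotient.out t.val)),
      N*b + 2*(Quotient.out t.val), rfl, by
        have hrel := t.2
        have hout : Ideal.Quotient.mk (Ideal.span {q}) (Quotient.out t.val) = t.val :=
          Quotient.out_eq t.val
        rw [← hout, rel_iff] at hrel
        obtain ⟨k, hk⟩ := hrel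
        exact ⟨k, by linear_combination 4*hk⟩⟩)
  constructor
  · rintro ⟨t, ht⟩ ⟨t', ht'⟩ hft
    have h := congrArg Subtype.val hft
    simp only at h
    rw [Ideal.Quotient.eq, Ideal.mem_span_singleton] at h
    obtain ⟨k, hk⟩ := h
    have h2 : (2 : GaussianInt) * (Quotient.out t - Quotient.out t') = 2 * (q * k) := by
      linear_combination hk
    have h2' : Quotient.out t - Quotient.out t' = q * k :=
      mul_left_cancel₀ (by decide : (2:GaussianInt) ≠ 0) h2
    apply Subtype.ext
    calc t = Ideal.Quotient.mk (Ideal.span {q}) (Quotient.out t) := (Quotient.out_eq t).symm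
      _ = Ideal.Quotient.mk (Ideal.span {q}) (Quotient.out t') := by
          rw [Ideal.Quotient.eq, Ideal.mem_span_singleton]; exact ⟨k, h2'⟩
      _ = t' := Quotient.out_eq t'
  · rintro ⟨x, y, hy, hdvd⟩
    have h4 : (4:GaussianInt) ∣ y^2 - (N*b)^2 := by
      obtain ⟨k, hk⟩ := hdvd
      exact ⟨q*k + b, by linear_combination hk⟩
    obtain ⟨τ, hτ⟩ := two_dvd_of_sq_cong h4
    have hyτ : y = N*b + 2*τ := by linear_combination hτ
    obtain ⟨k, hk⟩ := hdvd
    have hqd : q ∣ τ^2 + N*τ*b - b := by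
      refine ⟨k, mul_left_cancel₀ (by decide : (4:GaussianInt) ≠ 0) ?_⟩
      calc (4:GaussianInt) * (τ^2 + N*τ*b - b) = y^2 - b*(4+N^2*b) := by
            rw [hyτ]; ring
        _ = 4*q*k := hk
        _ = 4*(q*k) := by ring
    refine ⟨⟨Ideal.Quotient.mk (Ideal.span {q}) τ, ?_⟩, ?_⟩
    · rw [rel_iff]; exact hqd
    · apply Subtype.ext
      simp only
      rw [← hy, hyτ, Ideal.Quotient.eq, Ideal.mem_span_singleton]
      have hout : Ideal.Quotient.mk (Ideal.span {q})
          (Quotient.out (Ideal.Quotient.mk (Ideal.span {q}) τ)) =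
          Ideal.Quotient.mk (Ideal.span {q}) τ := Quotient.out_eq _
      rw [Ideal.Quotient.eq, Ideal.mem_span_singleton] at hout
      obtain ⟨j, hj⟩ := hout
      exact ⟨j, by linear_combination 2*hj⟩

end Stmt10Aux

set_option maxHeartbeats 1000000 in
open Stmt10Aux in
theorem stmt_10 (N q q₁ q₂ : GaussianInt) (hq : q ≠ 0) (hN : N ≠ 0)
    (hfac : q = q₁ * q₂) (h1 : ∃ m : ℕ, q₁ ∣ N ^ m) (h2 : IsCoprime q₂ N)
    (T : Finset GaussianInt) (hT : ∀ z : GaussianInt, ∃! b, b ∈ T ∧ q ∣ (z - b)) :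
    (∑ b ∈ T, Nat.card {x : GaussianInt ⧸ Ideal.span {2 * q} //
        ∃ y : GaussianInt, Ideal.Quotient.mk (Ideal.span {2 * q}) y = x ∧
          (4 * q) ∣ (y ^ 2 - b * (4 + N ^ 2 * b))})
      = Nat.card (GaussianInt ⧸ Ideal.span {q₁}) *
          Nat.card ((GaussianInt ⧸ Ideal.span {q₂})ˣ) := by
  classical
  obtain ⟨m, hm⟩ := h1
  have hcop : IsCoprime q₁ q₂ :=
    ((h2.pow_right (n := m)).of_isCoprime_of_dvd_right hm).symm
  letI instF : Fintype (GaussianInt ⧸ Ideal.span {q}) :=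
    @Fintype.ofFinite _ (Ideal.finiteQuotientOfFreeOfNeBot _ (by simpa [Ne, Ideal.span_singleton_eq_bot] using hq))
  rw [Finset.sum_congr rfl (fun b _ => Stmt10Aux.card_X q N b)]
  set n : GaussianInt ⧸ Ideal.span {q} := Ideal.Quotient.mk (Ideal.span {q}) N with hn
  have hbij : ∑ b ∈ T, Nat.card {t : GaussianInt ⧸ Ideal.span {q} //
        t^2 + n * t * (Ideal.Quotient.mk (Ideal.span {q}) b)
          - (Ideal.Quotient.mk (Ideal.span {q}) b) = 0}
      = ∑ β : GaussianInt ⧸ Ideal.span {q},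
          Nat.card {t : GaussianInt ⧸ Ideal.span {q} // t^2 + n * t * β - β = 0} := by
    apply Finset.sum_bij (i := fun b _ => Ideal.Quotient.mk (Ideal.span {q}) b)
    · intro a _; exact Finset.mem_univ _
    · intro a ha a' ha' h
      rw [Ideal.Quotient.eq, Ideal.mem_span_singleton] at h
      obtain ⟨c, _, hun⟩ := hT a
      have e1 : a = c := hun a ⟨ha, ⟨0, by ring⟩⟩
      have e2 : a' = c := hun a' ⟨ha', h⟩
      exact e1.trans e2.symm
    · intro β _
      obtain ⟨c, ⟨hcT, hcd⟩, _⟩ := hT (Quotient.out β)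
      refine ⟨c, hcT, ?_⟩
      have : Ideal.Quotient.mk (Ideal.span {q}) (Quotient.out β)
          = Ideal.Quotient.mk (Ideal.span {q}) c := by
        rw [Ideal.Quotient.eq, Ideal.mem_span_singleton]; exact hcd
      rw [← this]; exact Quotient.out_eq β
    · intro a _; rfl
  rw [hbij]
  letI : ∀ β : GaussianInt ⧸ Ideal.span {q},
      Fintype {t : GaussianInt ⧸ Ideal.span {q} // t^2 + n * t * β - β = 0} :=
    fun β => Subtype.fintype _
  have esig : Sol (GaussianInt ⧸ Ideal.span {q}) n
      ≃ (Σ β : GaussianInt ⧸ Ideal.span {q},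
          {t : GaussianInt ⧸ Ideal.span {q} // t^2 + n * t * β - β = 0}) :=
    Equiv.subtypeProdEquivSigmaSubtype (fun β t => t^2 + n * t * β - β = 0)
  have hsig : ∑ β : GaussianInt ⧸ Ideal.span {q},
      Nat.card {t : GaussianInt ⧸ Ideal.span {q} // t^2 + n * t * β - β = 0}
      = Nat.card (Sol (GaussianInt ⧸ Ideal.span {q}) n) := by
    rw [Nat.card_congr esig, Nat.card_eq_fintype_card, Fintype.card_sigma]
    simp [Nat.card_eq_fintype_card]
  rw [hsig]
  -- CRT
  have hspan : Ideal.span ({q} : Set GaussianInt) = Ideal.span {q₁} * Ideal.span {q₂} := by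
    rw [Ideal.span_singleton_mul_span_singleton, hfac]
  have hIcop : IsCoprime (Ideal.span {q₁} : Ideal GaussianInt) (Ideal.span {q₂}) :=
    (Ideal.isCoprime_span_singleton_iff _ _).mpr hcop
  set e2 : (GaussianInt ⧸ Ideal.span {q}) ≃+*
      (GaussianInt ⧸ Ideal.span {q₁}) × (GaussianInt ⧸ Ideal.span {q₂}) :=
    (Ideal.quotEquivOfEq hspan).trans (Ideal.quotientMulEquivQuotientProd _ _ hIcop) with he2def
  have he2 : e2 n = (Ideal.Quotient.mk (Ideal.span {q₁}) N,
      Ideal.Quotient.mk (Ideal.span {q₂}) N) := by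
    have hstep : e2 n = (Ideal.quotientMulEquivQuotientProd _ _ hIcop)
        ((Ideal.quotEquivOfEq hspan) (Ideal.Quotient.mk (Ideal.span {q}) N)) := rfl
    rw [Ideal.quotEquivOfEq_mk] at hstep
    rw [hstep]
    apply Prod.ext
    · rw [Ideal.quotientMulEquivQuotientProd_fst, Ideal.Quotient.factor_mk]
    · rw [Ideal.quotientMulEquivQuotientProd_snd, Ideal.Quotient.factor_mk]
  rw [Nat.card_congr (solEquivOfRingEquiv e2 n), he2,
    Nat.card_congr (solEquivProd _), Nat.card_prod]
  have hnil : IsNilpotent (Ideal.Quotient.mk (Ideal.span {q₁}) N) :=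
    ⟨m, by rw [← map_pow, Ideal.Quotient.eq_zero_iff_mem, Ideal.mem_span_singleton]; exact hm⟩
  have hunit : IsUnit (Ideal.Quotient.mk (Ideal.span {q₂}) N) := by
    obtain ⟨a, b', hab⟩ := h2
    apply IsUnit.of_mul_eq_one (Ideal.Quotient.mk (Ideal.span {q₂}) b')
    rw [← _root_.map_mul, ← map_one (Ideal.Quotient.mk (Ideal.span {q₂})),
      Ideal.Quotient.eq, Ideal.mem_span_singleton]
    exact ⟨-a, by linear_combination hab⟩
  rw [Nat.card_congr (solEquivOfNilpotent _ hnil), Nat.card_congr (solEquivOfUnit _ hunit)]
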